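/- Let B be a commutative local ring whose maximal ideal m satisfies m^r = 0 for some r, with residue field K. If x ∈ B[[t]] is a non-degenerate series (i.e. its image in K[[t]] is nonzero, equivalently a nonzero element of K((t))), then x becomes a unit in the Laurent series ring B((t)). -/

import Mathlib

/-- If `B` is local with nilpotent maximal ideal and residue field `K`, and
`x ∈ B[[t]]` is non-degenerate (nonzero image in `K[[t]]`), then `x` becomes a unit
in the Laurent series ring `B((t))`. -/
theorem isUnit_laurentSeries_of_nondegenerate {B : Type*} [CommRing B] [IsLocalRing B]
    (r : ℕ) (hm : (IsLocalRing.maximalIdeal B) ^ r = 0)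
    (x : PowerSeries B)
    (hx : PowerSeries.map (IsLocalRing.residue B) x ≠ 0) :
    IsUnit (HahnSeries.ofPowerSeries ℤ B x : LaurentSeries B) := by
  classical
  set m := IsLocalRing.maximalIdeal B with hmdef
  set a : PowerSeries B := PowerSeries.mk fun k =>
    if PowerSeries.coeff k x ∈ m then PowerSeries.coeff k x else 0 with ha
  set b : PowerSeries B := x - a with hb
  have hcoeffa : ∀ k, PowerSeries.coeff k a ∈ m := by
    intro k
    rw [ha, PowerSeries.coeff_mk]
    split <;> simp_all
  have hcoeffb : ∀ k, PowerSeries.coeff k b =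
      if PowerSeries.coeff k x ∈ m then 0 else PowerSeries.coeff k x := by
    intro k
    rw [hb, map_sub, ha, PowerSeries.coeff_mk]
    split <;> simp
  -- powers of `a` have coefficients in powers of `m`
  have hpow : ∀ j k, PowerSeries.coeff k (a ^ j) ∈ m ^ j := by
    intro j
    induction j with
    | zero => intro k; simp
    | succ j ih =>
      intro k
      rw [show a ^ (j + 1) = a * a ^ j from pow_succ' a j, PowerSeries.coeff_mul]
      refine Ideal.sum_mem _ fun p _ => ?_
      rw [show m ^ (j + 1) = m * m ^ j from pow_succ' m j]
      exact Ideal.mul_mem_mul (hcoeffa p.1) (ih p.2)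
  have haR : a ^ r = 0 := by
    ext k
    have := hpow r k
    rw [hm] at this
    simpa using this
  -- `b` is nonzero
  have hbne : b ≠ 0 := by
    have : ∃ k, PowerSeries.coeff k (PowerSeries.map (IsLocalRing.residue B) x) ≠ 0 := by
      contrapose! hx
      exact PowerSeries.ext hx
    obtain ⟨k, hk⟩ := this
    rw [PowerSeries.coeff_map] at hk
    have hkm : PowerSeries.coeff k x ∉ m := fun h => hk ((IsLocalRing.residue_eq_zero_iff _).mpr h)
    intro h0
    have := hcoeffb k
    rw [h0, if_neg hkm] at this
    simp only [map_zero] at this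
    exact hkm (by rw [← this]; exact (Submodule.zero_mem m))
  have hlt : b.order < ⊤ := PowerSeries.order_finite_iff_ne_zero.mpr hbne
  set n : ℕ := b.order.lift hlt with hn
  have hnb : PowerSeries.coeff n b ≠ 0 := by
    rw [hn, ENat.lift_eq_toNat_of_lt_top hlt]; exact PowerSeries.coeff_order hbne
  have hnm : PowerSeries.coeff n x ∉ m := by
    intro h
    rw [hcoeffb n, if_pos h] at hnb
    exact hnb rfl
  have hunit : IsUnit (PowerSeries.coeff n b) := by
    rw [hcoeffb n, if_neg hnm]
    exact IsLocalRing.notMem_maximalIdeal.mp hnm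
  obtain ⟨c, hc⟩ : PowerSeries.X ^ n ∣ b := by
    rw [hn, ENat.lift_eq_toNat_of_lt_top hlt]; exact PowerSeries.X_pow_order_dvd
  have hcunit : IsUnit c := by
    rw [PowerSeries.isUnit_iff_constantCoeff]
    have : PowerSeries.coeff n b = PowerSeries.constantCoeff c := by
      rw [hc]
      simpa using PowerSeries.coeff_X_pow_mul c n 0
    rwa [this] at hunit
  set f := (HahnSeries.ofPowerSeries ℤ B) with hf
  have hXunit : IsUnit (f PowerSeries.X) := by
    rw [HahnSeries.ofPowerSeries_X]
    refine IsUnit.of_mul_eq_one (HahnSeries.single (-1 : ℤ) 1) ?_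
    rw [HahnSeries.single_mul_single]
    simp [HahnSeries.single_zero_one]
  have hbunit : IsUnit (f b) := by
    rw [hc, map_mul, map_pow]
    exact ((hXunit.pow n).mul (hcunit.map f))
  have hanil : IsNilpotent (f a) := ⟨r, by rw [← map_pow, haR, map_zero]⟩
  have hxab : x = b + a := by rw [hb]; ring
  rw [hxab, map_add]
  exact hanil.isUnit_add_left_of_commute hbunit (Commute.all _ _)
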